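/- If A ⊆ ℕ is a Δ-set with positive upper asymptotic density, then for every ℓ ∈ ℕ there exist b, c ∈ ℕ with b ∈ A, c ∈ A, and b + ℓ·c ∈ A. -/

import Mathlib

open scoped Classical

noncomputable def upperDensity (A : Set ℕ) : ℝ :=
  Filter.limsup (fun n => (((Finset.Icc 1 n).filter (fun m => m ∈ A)).card : ℝ) / n) Filter.atTop

noncomputable def lowerDensity (A : Set ℕ) : ℝ :=
  Filter.liminf (fun n => (((Finset.Icc 1 n).filter (fun m => m ∈ A)).card : ℝ) / n) Filter.atTop

/-- The difference set Δ(X) = {x' - x : x, x' ∈ X, x' > x}. -/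
def diffSet (X : Set ℕ) : Set ℕ := {d | ∃ x ∈ X, ∃ x' ∈ X, x < x' ∧ x' - x = d}

/-- A is thick if it contains arbitrarily long intervals of consecutive integers. -/
def Thick (A : Set ℕ) : Prop := ∀ k : ℕ, ∃ a : ℕ, ∀ i < k, a + i ∈ A

/-- A is a Δ-set if it contains the difference set of some infinite X. -/
def IsDeltaSet (A : Set ℕ) : Prop := ∃ X : Set ℕ, X.Infinite ∧ diffSet X ⊆ A

/-- Shift lemma: the count of n ∈ [1,N] with n+t ∈ A is at least the count of A in [1,N], minus t. -/
lemma shift_count (A : Set ℕ) (N t : ℕ) :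
    ((Finset.Icc 1 N).filter (fun m => m ∈ A)).card ≤
      ((Finset.Icc 1 N).filter (fun n => n + t ∈ A)).card + t := by
  classical
  set P := (Finset.Icc 1 N).filter (fun m => m ∈ A) with hP
  set S := (Finset.Icc 1 N).filter (fun n => n + t ∈ A) with hS
  have h1 : (P.filter (fun a => t < a)).card ≤ S.card := by
    apply Finset.card_le_card_of_injOn (fun a => a - t)
    · intro a ha
      simp only [hP, Finset.mem_coe, Finset.mem_filter, Finset.mem_Icc] at ha
      obtain ⟨⟨⟨h1a, h2a⟩, hAa⟩, hta⟩ := ha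
      simp only [hS, Finset.mem_coe, Finset.mem_filter, Finset.mem_Icc]
      refine ⟨⟨by omega, by omega⟩, ?_⟩
      rwa [Nat.sub_add_cancel hta.le]
    · intro a ha b hb hab
      simp only [Finset.mem_coe, Finset.mem_filter] at ha hb
      replace hab : a - t = b - t := hab
      omega
  have h2 : (P.filter (fun a => ¬ t < a)).card ≤ t := by
    calc (P.filter (fun a => ¬ t < a)).card ≤ (Finset.Icc 1 t).card := by
          apply Finset.card_le_card
          intro a ha
          simp only [hP, Finset.mem_filter, Finset.mem_Icc] at ha ⊢
          omega
      _ = t := by simp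
  have h3 := Finset.card_filter_add_card_filter_not (s := P) (p := fun a => t < a)
  omega

theorem stmt4 (A : Set ℕ) (hA : IsDeltaSet A) (hd : 0 < upperDensity A) (ℓ : ℕ) :
    ∃ b c : ℕ, b ∈ A ∧ c ∈ A ∧ b + ℓ * c ∈ A := by
  classical
  obtain ⟨X, hXinf, hXsub⟩ := hA
  haveI : Infinite X := Set.infinite_coe_iff.mpr hXinf
  set e : ℕ ↪o ℕ := Nat.orderEmbeddingOfSet X with he_def
  have heX : ∀ i, e i ∈ X := by
    intro i
    have : e i ∈ Set.range (Nat.orderEmbeddingOfSet X) := Set.mem_range_self i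
    rwa [Nat.orderEmbeddingOfSet_range] at this
  have hemono : ∀ {i j : ℕ}, i < j → e i < e j := fun h => e.strictMono h
  set δ := upperDensity A with hδ_def
  set cnt : ℕ → ℕ := fun n => ((Finset.Icc 1 n).filter (fun m => m ∈ A)).card with hcnt
  -- frequently the density exceeds δ/2
  have hfreq : ∃ᶠ n in Filter.atTop, δ / 2 < (cnt n : ℝ) / n := by
    have hcob : Filter.IsCoboundedUnder (· ≤ ·) Filter.atTop (fun n : ℕ => (cnt n : ℝ) / n) :=
      Filter.isCoboundedUnder_le_of_eventually_le Filter.atTop (x := (0:ℝ))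
        (by filter_upwards with n; positivity)
    have h2 : δ / 2 < Filter.limsup (fun n : ℕ => (cnt n : ℝ) / n) Filter.atTop := by
      have heq : Filter.limsup (fun n : ℕ => (cnt n : ℝ) / n) Filter.atTop = upperDensity A := rfl
      rw [heq, ← hδ_def]; linarith
    exact Filter.frequently_lt_of_lt_limsup hcob h2
  set m : ℕ := ⌈2 / δ⌉₊ with hm_def
  have hm : (2 : ℝ) / δ ≤ m := Nat.le_ceil _
  set t : ℕ → ℕ := fun i => ℓ * (e i - e 0) with ht_def
  set T : ℕ := t m with hT_def
  have htmono : ∀ i ≤ m, t i ≤ T := by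
    intro i hi
    have : e i ≤ e m := e.monotone hi
    have h0i : e 0 ≤ e i := e.monotone (Nat.zero_le i)
    simp only [ht_def, hT_def]
    exact Nat.mul_le_mul_left ℓ (by omega)
  -- pick a good N
  have hN0 : ∃ N : ℕ, (1 ≤ N ∧ ((m:ℝ)+1) * T < δ / 2 * N) ∧ δ / 2 < (cnt N : ℝ) / N := by
    have hev : ∀ᶠ N : ℕ in Filter.atTop, 1 ≤ N ∧ ((m:ℝ)+1) * T < δ / 2 * N := by
      have h1 : ∀ᶠ N : ℕ in Filter.atTop, 1 ≤ N := Filter.eventually_ge_atTop 1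
      have h2 : ∀ᶠ N : ℕ in Filter.atTop, (⌈((m:ℝ)+1) * T / (δ/2)⌉₊ + 1 : ℕ) ≤ N :=
        Filter.eventually_ge_atTop _
      filter_upwards [h1, h2] with N hN1 hN2
      refine ⟨hN1, ?_⟩
      have hδ2 : (0:ℝ) < δ / 2 := by linarith
      have : ((m:ℝ)+1) * T / (δ/2) < N := by
        have := Nat.lt_of_ceil_lt (show ⌈((m:ℝ)+1) * T / (δ/2)⌉₊ < N by omega)
        exact this
      calc ((m:ℝ)+1) * T = ((m:ℝ)+1) * T / (δ/2) * (δ/2) := by field_simp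
        _ < (N:ℝ) * (δ/2) := by exact mul_lt_mul_of_pos_right this hδ2
        _ = δ / 2 * N := by ring
    exact (hfreq.and_eventually hev).exists.imp fun N h => ⟨h.2, h.1⟩
  obtain ⟨N, ⟨hN1, hNT⟩, hNd⟩ := hN0
  have hNpos : (0:ℝ) < N := by exact_mod_cast hN1
  have hcntN : δ / 2 * N < (cnt N : ℝ) := (lt_div_iff₀ hNpos).mp hNd
  -- the translated sets
  set S : ℕ → Finset ℕ := fun i => (Finset.Icc 1 N).filter (fun n => n + t i ∈ A) with hS_def
  -- counting: sum of cards exceeds N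
  have hsum : N < ∑ i ∈ Finset.range (m+1), (S i).card := by
    have hsum1 : (m+1) * cnt N ≤ (∑ i ∈ Finset.range (m+1), (S i).card) + (m+1) * T := by
      calc (m+1) * cnt N = ∑ i ∈ Finset.range (m+1), cnt N := by
            rw [Finset.sum_const, Finset.card_range, smul_eq_mul]
        _ ≤ ∑ i ∈ Finset.range (m+1), ((S i).card + T) := by
            apply Finset.sum_le_sum
            intro i hi
            have h1 := shift_count A N (t i)
            have h2 := htmono i (by simpa using Nat.lt_succ_iff.mp (Finset.mem_range.mp hi))
            simp only [hcnt, hS_def]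
            omega
        _ = (∑ i ∈ Finset.range (m+1), (S i).card) + (m+1) * T := by
            rw [Finset.sum_add_distrib, Finset.sum_const, Finset.card_range, smul_eq_mul]
    -- real inequality: (m+1) * cnt N > N + (m+1) * T
    have hreal : (N : ℝ) + ((m:ℝ)+1) * T < ((m:ℝ)+1) * cnt N := by
      have hmδ : (1:ℝ) + δ/2 ≤ ((m:ℝ)+1) * (δ/2) := by
        have hδpos : (0:ℝ) < δ := hd
        have : (1:ℝ) ≤ (m:ℝ) * (δ/2) := by
          calc (1:ℝ) = (2/δ) * (δ/2) := by field_simp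
            _ ≤ (m:ℝ) * (δ/2) := by
              apply mul_le_mul_of_nonneg_right hm (by linarith)
        nlinarith
      calc (N:ℝ) + ((m:ℝ)+1) * T < (N:ℝ) + δ/2 * N := by linarith
        _ = (1 + δ/2) * N := by ring
        _ ≤ ((m:ℝ)+1) * (δ/2) * N := by
            apply mul_le_mul_of_nonneg_right hmδ (le_of_lt hNpos)
        _ = ((m:ℝ)+1) * (δ/2 * N) := by ring
        _ < ((m:ℝ)+1) * cnt N := by
            apply mul_lt_mul_of_pos_left hcntN
            positivity
    have hnat : N + (m+1) * T < (m+1) * cnt N := by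
      have h1 : ((N + (m+1) * T : ℕ) : ℝ) < (((m+1) * cnt N : ℕ) : ℝ) := by
        push_cast
        convert hreal using 2 <;> push_cast <;> ring
      exact_mod_cast h1
    omega
  -- pigeonhole: two S i intersect
  have hpigeon : ∃ i ∈ Finset.range (m+1), ∃ j ∈ Finset.range (m+1), i ≠ j ∧
      ∃ n, n ∈ S i ∧ n ∈ S j := by
    by_contra hcon
    push_neg at hcon
    have hdisj : ∀ i ∈ Finset.range (m+1), ∀ j ∈ Finset.range (m+1), i ≠ j →
        Disjoint (S i) (S j) := by
      intro i hi j hj hij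
      rw [Finset.disjoint_left]
      intro n hni hnj
      exact hcon i hi j hj hij n hni hnj
    have hcard : ∑ i ∈ Finset.range (m+1), (S i).card =
        ((Finset.range (m+1)).biUnion S).card := (Finset.card_biUnion hdisj).symm
    have hsub : (Finset.range (m+1)).biUnion S ⊆ Finset.Icc 1 N := by
      intro n hn
      simp only [Finset.mem_biUnion, hS_def, Finset.mem_filter] at hn
      obtain ⟨i, _, hn, _⟩ := hn
      exact hn
    have := Finset.card_le_card hsub
    simp only [Nat.card_Icc] at this
    omega
  obtain ⟨i, hi, j, hj, hij, n, hni, hnj⟩ := hpigeon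
  -- WLOG i < j
  rcases hij.lt_or_gt with hlt | hlt
  case _ =>
    -- i < j case
    simp only [hS_def, Finset.mem_filter] at hni hnj
    refine ⟨n + t i, e j - e i, hni.2, ?_, ?_⟩
    · exact hXsub ⟨e i, heX i, e j, heX j, hemono hlt, rfl⟩
    · have key : t i + ℓ * (e j - e i) = t j := by
        have h0i : e 0 ≤ e i := e.monotone (Nat.zero_le i)
        have hij' : e i < e j := hemono hlt
        simp only [ht_def]
        rw [← Nat.mul_add]
        congr 1
        omega
      rw [add_assoc, key]
      exact hnj.2
  case _ =>
    simp only [hS_def, Finset.mem_filter] at hni hnj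
    refine ⟨n + t j, e i - e j, hnj.2, ?_, ?_⟩
    · exact hXsub ⟨e j, heX j, e i, heX i, hemono hlt, rfl⟩
    · have key : t j + ℓ * (e i - e j) = t i := by
        have h0j : e 0 ≤ e j := e.monotone (Nat.zero_le j)
        have hij' : e j < e i := hemono hlt
        simp only [ht_def]
        rw [← Nat.mul_add]
        congr 1
        omega
      rw [add_assoc, key]
      exact hni.2
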